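/- Let $0<a<1$ and let $p(z)=z^4+(1-4a+a^2)z^3+(1-4a+4a^2-a^3)z^2+(-a+4a^2-a^3)z-a^3$. Then all four zeros of $p$ lie in the open unit disk $|z|<1$. -/

import Mathlib

/-- All four zeros of the quartic arising from `ω(z) = -(a-z)^2/(1-az)^2` lie in the unit disk. -/
theorem stmt_3 (a : ℝ) (h0 : 0 < a) (h1 : a < 1) :
    ∀ z : ℂ, z ^ 4 + (1 - 4 * (a : ℂ) + (a : ℂ) ^ 2) * z ^ 3 +
      (1 - 4 * (a : ℂ) + 4 * (a : ℂ) ^ 2 - (a : ℂ) ^ 3) * z ^ 2 +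
      (-(a : ℂ) + 4 * (a : ℂ) ^ 2 - (a : ℂ) ^ 3) * z - (a : ℂ) ^ 3 = 0 → ‖z‖ < 1 := by
  intro z hp
  set s : ℝ := a^2 - 3*a + 1 with hs
  have hfac : (z - (a:ℂ)) * (z^3 + ((s:ℝ):ℂ)*z^2 + ((s:ℝ):ℂ)*z + ((a:ℝ):ℂ)^2) = 0 := by
    rw [hs]; push_cast
    linear_combination hp
  rcases mul_eq_zero.mp hfac with h | hq
  · have hz : z = (a : ℂ) := by linear_combination h
    rw [hz]
    simpa [Complex.norm_real, abs_of_pos h0] using h1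
  · by_contra hc
    push_neg at hc
    set x := z.re with hx
    set y := z.im with hy
    have hnorm : ‖z‖^2 = x^2 + y^2 := by
      rw [Complex.sq_norm, Complex.normSq_apply]; ring
    have hxy : 1 ≤ x^2 + y^2 := by nlinarith [norm_nonneg z]
    have hre := congrArg Complex.re hq
    have him := congrArg Complex.im hq
    simp [Complex.ext_iff, pow_succ, Complex.add_re, Complex.add_im, Complex.mul_re,
      Complex.mul_im] at hre him
    have hre' : x^3 - 3*x*y^2 + s*(x^2 - y^2) + s*x + a^2 = 0 := by linear_combination hre
    have him' : y * (3*x^2 - y^2 + 2*s*x + s) = 0 := by linear_combination him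
    clear hre him hp hfac hq hc hnorm
    have hs1 : 0 < s + 1 := by nlinarith
    have hs2 : s < 1 := by nlinarith
    have ha1 : a^2 < 1 := by nlinarith
    have ha2 : 0 < (a - 1)^2 := by nlinarith
    rcases eq_or_ne y 0 with hy0 | hy0
    · -- real root case
      rw [hy0] at hre' hxy
      have hq1 : x^3 + s*x^2 + s*x + a^2 = 0 := by linear_combination hre'
      rcases le_or_gt 1 x with hx1 | hx1
      · have e : 3*(a-1)^2 + 3*(s+1)*(x-1) + (x-1)^2*(x+s+2) = 0 := by
          linear_combination hq1
        have t2 : 0 ≤ 3*(s+1)*(x-1) :=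
          mul_nonneg (by linarith) (by linarith)
        have t3 : 0 ≤ (x-1)^2*(x+s+2) :=
          mul_nonneg (sq_nonneg _) (by linarith)
        linarith
      · have hx2 : x ≤ -1 := by nlinarith
        have e : (a^2-1) + (3-s)*(x+1) + (x+1)^2*(x+s-2) = 0 := by
          linear_combination hq1
        have t2 : (3-s)*(x+1) ≤ 0 :=
          mul_nonpos_of_nonneg_of_nonpos (by linarith) (by linarith)
        have t3 : (x+1)^2*(x+s-2) ≤ 0 :=
          mul_nonpos_of_nonneg_of_nonpos (sq_nonneg _) (by linarith)
        linarith
    · have h3 : 3*x^2 - y^2 + 2*s*x + s = 0 := by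
        rcases mul_eq_zero.mp him' with h | h
        · exact absurd h hy0
        · exact h
      have hY : y^2 = 3*x^2 + 2*s*x + s := by linarith
      have hg : 8*x^3 + 8*s*x^2 + 2*s*(1+s)*x + s^2 - a^2 = 0 := by
        linear_combination (-1)*hre' - (3*x + s)*hY
      have hq2 : (2*x+1)*(2*x-1+s) = x^2 + y^2 - 1 := by linear_combination (-1)*hY
      have hquad : 0 ≤ (2*x + 1) * (2*x - 1 + s) := by linarith
      rcases le_or_gt (2*x + 1) 0 with hc1 | hc1
      · have e : -24*a + (x + 1/2)*((8*x + 4*s - 2)^2 + 12) = 0 := by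
          linear_combination 8*hg
        have t2 : (x + 1/2)*((8*x + 4*s - 2)^2 + 12) ≤ 0 :=
          mul_nonpos_of_nonpos_of_nonneg (by linarith) (by positivity)
        linarith
      · have hx3 : 0 ≤ 2*x - 1 + s := by
          by_contra hneg
          push_neg at hneg
          have := mul_neg_of_pos_of_neg hc1 hneg
          linarith
        have hf : 0 < (s+1)*(3-s) := mul_pos hs1 (by linarith)
        have e : 8*(1 - a^2) + (x - (1-s)/2)*((8*x + 2*s + 2)^2 + 4*((s+1)*(3-s))) = 0 := by
          linear_combination 8*hg
        have t2 : 0 ≤ (x - (1-s)/2)*((8*x + 2*s + 2)^2 + 4*((s+1)*(3-s))) :=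
          mul_nonneg (by linarith) (by linarith [sq_nonneg (8*x + 2*s + 2)])
        linarith
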